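/- arXiv:2506.21235 — 4 statements merged into one kernel-verified Lean document; each statement's English description precedes it below -/
import Mathlib

section
/- Let G be a graph without isolated vertices with minimum degree δ(G). Then γ_{gr}^{×2}(G) ≤ |V(G)| + 1 − δ(G). -/
open SimpleGraph

variable {V : Type*}

/-- The closed neighborhood of a vertex. -/
def cnbr (G : SimpleGraph V) (v : V) : Set V := insert v (G.neighborSet v)

/-- The number of vertices in the list `l` that dominate `u` (i.e. whose closed
neighborhood contains `u`). -/
noncomputable def domCount (G : SimpleGraph V) (u : V) (l : List V) : ℕ :=
  {w | w ∈ l ∧ u ∈ cnbr G w}.ncard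

/-- A double neighborhood sequence (DNS): a sequence of distinct vertices in which each
vertex dominates some vertex dominated at most once by its predecessors. -/
def IsDNS (G : SimpleGraph V) (l : List V) : Prop :=
  l.Nodup ∧ ∀ i : Fin l.length, ∃ u ∈ cnbr G (l.get i), domCount G u (l.take i) ≤ 1

/-- A double dominating sequence (DDS): a DNS whose underlying set is doubly dominating. -/
def IsDDS (G : SimpleGraph V) (l : List V) : Prop :=
  IsDNS G l ∧ ∀ v, 2 ≤ domCount G v l

/-- The Grundy double domination number: maximum length of a DDS. -/
noncomputable def gddn (G : SimpleGraph V) : ℕ :=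
  sSup {n | ∃ l : List V, IsDDS G l ∧ l.length = n}

/-- The maximum double neighborhood number: maximum length of a DNS. -/
noncomputable def mdnn (G : SimpleGraph V) : ℕ :=
  sSup {n | ∃ l : List V, IsDNS G l ∧ l.length = n}

/-- A legal (Grundy domination) sequence. -/
def IsLegal (G : SimpleGraph V) (l : List V) : Prop :=
  l.Nodup ∧ ∀ i : Fin l.length, ∃ u ∈ cnbr G (l.get i), domCount G u (l.take i) = 0

/-- A dominating sequence: legal sequence whose underlying set dominates. -/
def IsDomSeq (G : SimpleGraph V) (l : List V) : Prop :=
  IsLegal G l ∧ ∀ v, 1 ≤ domCount G v l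

/-- The Grundy domination number: maximum length of a dominating sequence. -/
noncomputable def grundy (G : SimpleGraph V) : ℕ :=
  sSup {n | ∃ l : List V, IsDomSeq G l ∧ l.length = n}

/-- The double domination number: minimum size of a double dominating set. -/
noncomputable def ddomNum (G : SimpleGraph V) : ℕ :=
  sInf {n | ∃ D : Set V, (∀ v, 2 ≤ {w | w ∈ D ∧ v ∈ cnbr G w}.ncard) ∧ D.ncard = n}

/-- γ_{gr}^{×2}(G) ≤ |V(G)| + 1 − δ(G). -/
theorem stmt1 [Fintype V] [DecidableEq V] (G : SimpleGraph V) [DecidableRel G.Adj]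
    (hiso : ∀ v : V, ∃ u, G.Adj v u) :
    gddn G ≤ Fintype.card V + 1 - G.minDegree := by
  classical
  apply csSup_le'
  rintro k ⟨l, ⟨⟨hnd, hdns⟩, hdd⟩, rfl⟩
  rcases eq_or_ne l [] with rfl | hl
  · exact Nat.zero_le _
  have hne : Nonempty V := ⟨l.head hl⟩
  have hδ1 : 1 ≤ G.minDegree := by
    obtain ⟨w, hw⟩ := G.exists_minimal_degree_vertex
    obtain ⟨u, hu⟩ := hiso w
    rw [hw]
    exact (G.degree_pos_iff_exists_adj w).2 ⟨u, hu⟩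
  set n := l.length with hn
  have hn1 : 1 ≤ n := List.length_pos_iff.2 hl
  have hlt : n - 1 < n := by omega
  obtain ⟨u, hu, hcount⟩ := hdns ⟨n - 1, hlt⟩
  have hget : l.get ⟨n - 1, hlt⟩ = l.getLast hl := (List.getLast_eq_getElem hl).symm
  have htake : l.take (n - 1) = l.dropLast := (List.dropLast_eq_take (l := l)).symm
  rw [htake] at hcount
  set T : Finset V := l.dropLast.toFinset.filter (fun w => u ∈ cnbr G w) with hT
  have hTcard : T.card ≤ 1 := by
    have hset : {w | w ∈ l.dropLast ∧ u ∈ cnbr G w} = ↑T := by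
      ext w; simp [hT]
    rw [domCount, hset, Set.ncard_coe_finset] at hcount
    exact hcount
  set S : Finset V := l.toFinset with hS
  set N : Finset V := insert u (G.neighborFinset u) with hN
  have hScard : S.card = n := by
    rw [hS, List.toFinset_card_of_nodup hnd]
  have hNcard : N.card = G.degree u + 1 := by
    rw [hN, Finset.card_insert_of_notMem (by simp), G.card_neighborFinset_eq_degree]
  have hsub : S ∩ N ⊆ insert (l.getLast hl) T := by
    intro w hw
    obtain ⟨hwS, hwN⟩ := Finset.mem_inter.1 hw
    have hwcn : u ∈ cnbr G w := by
      rw [hN] at hwN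
      rcases Finset.mem_insert.1 hwN with rfl | hadj
      · exact Set.mem_insert _ _
      · exact Set.mem_insert_iff.2 (Or.inr ((G.mem_neighborFinset _ _).1 hadj).symm)
    have hwl : w ∈ l := List.mem_toFinset.1 hwS
    have : w ∈ l.dropLast ++ [l.getLast hl] := by
      rw [List.dropLast_append_getLast hl]; exact hwl
    rcases List.mem_append.1 this with hmem | hmem
    · exact Finset.mem_insert.2 (Or.inr (Finset.mem_filter.2 ⟨List.mem_toFinset.2 hmem, hwcn⟩))
    · exact Finset.mem_insert.2 (Or.inl (List.mem_singleton.1 hmem))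
  have hinter : (S ∩ N).card ≤ 2 := by
    calc (S ∩ N).card ≤ (insert (l.getLast hl) T).card := Finset.card_le_card hsub
      _ ≤ T.card + 1 := Finset.card_insert_le _ _
      _ ≤ 2 := by omega
  have hunion : (S ∪ N).card ≤ Fintype.card V := Finset.card_le_univ _
  have hkey : (S ∪ N).card + (S ∩ N).card = S.card + N.card := Finset.card_union_add_card_inter S N
  have hdeg : G.minDegree ≤ G.degree u := G.minDegree_le_degree u
  omega
end

section
/- Let G be a graph without isolated vertices. Then γ_{gr}(G) + 1 ≤ γ_{gr}^{×2}(G), where γ_{gr}(G) is the Grundy domination number and γ_{gr}^{×2}(G) is the Grundy double domination number. -/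
open SimpleGraph
open scoped Classical

variable {V : Type*}

lemma mem_cnbr_comm (G : SimpleGraph V) {u w : V} : u ∈ cnbr G w ↔ w ∈ cnbr G u := by
  simp only [cnbr, Set.mem_insert_iff, mem_neighborSet]
  constructor <;> rintro (h | h) <;> simp [h.symm, G.adj_symm]

lemma self_mem_cnbr (G : SimpleGraph V) (v : V) : v ∈ cnbr G v := Set.mem_insert _ _

lemma domCount_append [Fintype V] (G : SimpleGraph V) (u w : V) (l : List V) (hw : w ∉ l) :
    domCount G u (l ++ [w]) = domCount G u l + if u ∈ cnbr G w then 1 else 0 := by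
  unfold domCount
  by_cases h : u ∈ cnbr G w
  · rw [if_pos h]
    have : {x | x ∈ l ++ [w] ∧ u ∈ cnbr G x} = insert w {x | x ∈ l ∧ u ∈ cnbr G x} := by
      ext x; simp only [Set.mem_insert_iff, Set.mem_setOf_eq, List.mem_append, List.mem_singleton]
      constructor
      · rintro ⟨hx | hx, hu⟩
        · exact Or.inr ⟨hx, hu⟩
        · exact Or.inl hx
      · rintro (rfl | ⟨hx, hu⟩)
        · exact ⟨Or.inr rfl, h⟩
        · exact ⟨Or.inl hx, hu⟩
    rw [this, Set.ncard_insert_of_notMem (fun hh => hw hh.1) (Set.toFinite _)]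
  · rw [if_neg h, add_zero]
    congr 1
    ext x; simp only [Set.mem_setOf_eq, List.mem_append, List.mem_singleton]
    constructor
    · rintro ⟨hx | rfl, hu⟩
      · exact ⟨hx, hu⟩
      · exact absurd hu h
    · rintro ⟨hx, hu⟩; exact ⟨Or.inl hx, hu⟩

lemma domCount_mono [Fintype V] (G : SimpleGraph V) (u : V) {l l' : List V} (h : List.Sublist l l') :
    domCount G u l ≤ domCount G u l' := by
  apply Set.ncard_le_ncard _ (Set.toFinite _)
  rintro x ⟨hx, hu⟩; exact ⟨h.mem hx, hu⟩

lemma one_le_domCount [Fintype V] (G : SimpleGraph V) {u w : V} {l : List V}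
    (hw : w ∈ l) (hu : u ∈ cnbr G w) : 1 ≤ domCount G u l := by
  rw [Nat.one_le_iff_ne_zero]
  intro h0
  have := (Set.ncard_eq_zero (Set.toFinite _)).mp h0
  exact absurd this (Set.nonempty_iff_ne_empty.mp ⟨w, hw, hu⟩)

lemma two_le_ncard_cnbr [Fintype V] (G : SimpleGraph V) (hiso : ∀ v : V, ∃ u, G.Adj v u)
    (v : V) : 2 ≤ (cnbr G v).ncard := by
  obtain ⟨u, hu⟩ := hiso v
  have h1 : (G.neighborSet v).Nonempty := ⟨u, hu⟩
  have h2 : v ∉ G.neighborSet v := by simp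
  rw [cnbr, Set.ncard_insert_of_notMem h2 (Set.toFinite _)]
  have := (Set.ncard_pos (Set.toFinite (G.neighborSet v))).mpr h1
  omega

lemma exists_fresh [Fintype V] (G : SimpleGraph V) (hiso : ∀ v : V, ∃ u, G.Adj v u)
    {v : V} {l : List V} (h : domCount G v l ≤ 1) : ∃ w, w ∈ cnbr G v ∧ w ∉ l := by
  by_contra hc
  push_neg at hc
  have hsub : cnbr G v ⊆ {w | w ∈ l ∧ v ∈ cnbr G w} := by
    intro w hw
    exact ⟨hc w hw, (mem_cnbr_comm G).mpr hw⟩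
  have := Set.ncard_le_ncard hsub (Set.toFinite _)
  have h2 := two_le_ncard_cnbr G hiso v
  unfold domCount at h
  omega

lemma take_append_singleton (l : List V) (w : V) {n : ℕ} (hn : n ≤ l.length) :
    (l ++ [w]).take n = l.take n := by
  rw [List.take_append, Nat.sub_eq_zero_of_le hn]
  simp

lemma get_append_last (l : List V) (w : V) (i : Fin (l ++ [w]).length)
    (hi : (i : ℕ) = l.length) : (l ++ [w]).get i = w := by
  have : (l ++ [w]).get i = (l ++ [w])[(i : ℕ)] := rfl
  rw [this]
  simp only [hi]
  rw [List.getElem_append_right (le_refl l.length)]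
  simp

lemma IsDNS.append [Fintype V] {G : SimpleGraph V} {l : List V} (h : IsDNS G l)
    {v w : V} (hw : w ∉ l) (hvw : w ∈ cnbr G v) (hv : domCount G v l ≤ 1) :
    IsDNS G (l ++ [w]) := by
  constructor
  · rw [List.nodup_append]
    exact ⟨h.1, List.nodup_singleton w, by simpa using (fun a ha h => hw (h ▸ ha) : ∀ a ∈ l, ¬a = w)⟩
  intro i
  have hil : (i : ℕ) < l.length + 1 := by simpa using i.isLt
  rcases lt_or_ge (i : ℕ) l.length with hi | hi
  · obtain ⟨u, hu, hc⟩ := h.2 ⟨i, hi⟩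
    refine ⟨u, ?_, ?_⟩
    · rwa [show (l ++ [w]).get i = l.get ⟨i, hi⟩ from List.getElem_append_left hi]
    · rwa [take_append_singleton _ _ hi.le]
  · have hi' : (i : ℕ) = l.length := by omega
    refine ⟨v, ?_, ?_⟩
    · rw [get_append_last _ _ _ hi']
      exact (mem_cnbr_comm G).mp hvw
    · rw [hi', take_append_singleton _ _ le_rfl, List.take_length]
      exact hv

lemma IsLegal.append [Fintype V] {G : SimpleGraph V} {l : List V} (h : IsLegal G l)
    {v : V} (hv : domCount G v l = 0) : IsLegal G (l ++ [v]) := by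
  have hvl : v ∉ l := fun hm => by
    have := one_le_domCount G hm (self_mem_cnbr G v); omega
  constructor
  · rw [List.nodup_append]
    exact ⟨h.1, List.nodup_singleton v, by simpa using (fun a ha h => hvl (h ▸ ha) : ∀ a ∈ l, ¬a = v)⟩
  intro i
  have hil : (i : ℕ) < l.length + 1 := by simpa using i.isLt
  rcases lt_or_ge (i : ℕ) l.length with hi | hi
  · obtain ⟨u, hu, hc⟩ := h.2 ⟨i, hi⟩
    refine ⟨u, ?_, ?_⟩
    · rwa [show (l ++ [v]).get i = l.get ⟨i, hi⟩ from List.getElem_append_left hi]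
    · rwa [take_append_singleton _ _ hi.le]
  · have hi' : (i : ℕ) = l.length := by omega
    refine ⟨v, ?_, ?_⟩
    · rw [get_append_last _ _ _ hi']
      exact self_mem_cnbr G v
    · rw [hi', take_append_singleton _ _ le_rfl, List.take_length]
      exact hv

lemma exists_max_length [Fintype V] (P : List V → Prop) (hP : ∀ l, P l → l.Nodup)
    (hne : ∃ l, P l) : ∃ l, P l ∧ ∀ l', P l' → l'.length ≤ l.length := by
  set S : Set ℕ := {n | ∃ l, P l ∧ l.length = n} with hS
  have hbdd : BddAbove S :=
    ⟨Fintype.card V, by rintro n ⟨l, hl, rfl⟩; exact (hP l hl).length_le_card⟩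
  obtain ⟨l0, hl0⟩ := hne
  have hne' : S.Nonempty := ⟨l0.length, l0, hl0, rfl⟩
  obtain ⟨l, hl, hlen⟩ := Nat.sSup_mem hne' hbdd
  exact ⟨l, hl, fun l' hl' => hlen ▸ le_csSup hbdd ⟨l', hl', rfl⟩⟩

lemma IsLegal.isDNS [Fintype V] {G : SimpleGraph V} {l : List V} (h : IsLegal G l) :
    IsDNS G l := by
  refine ⟨h.1, fun i => ?_⟩
  obtain ⟨u, hu, hc⟩ := h.2 i
  exact ⟨u, hu, by omega⟩

/-- There exists a dominating sequence. -/
lemma exists_domSeq [Fintype V] (G : SimpleGraph V) : ∃ l, IsDomSeq G l := by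
  obtain ⟨l, hl, hmax⟩ := exists_max_length (IsLegal G) (fun _ h => h.1)
    ⟨[], List.nodup_nil, fun i => absurd i.isLt (by simp)⟩
  refine ⟨l, hl, fun v => ?_⟩
  by_contra hc
  have h0 : domCount G v l = 0 := by omega
  have := hmax _ (hl.append h0)
  simp at this

/-- γ_{gr}(G) + 1 ≤ γ_{gr}^{×2}(G). -/
theorem stmt2 [Fintype V] [Nonempty V] (G : SimpleGraph V)
    (hiso : ∀ v : V, ∃ u, G.Adj v u) :
    grundy G + 1 ≤ gddn G := by
  classical
  -- grundy is attained
  have hbddD : BddAbove {n | ∃ l : List V, IsDomSeq G l ∧ l.length = n} :=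
    ⟨Fintype.card V, by rintro n ⟨l, hl, rfl⟩; exact hl.1.1.length_le_card⟩
  obtain ⟨l0, hl0⟩ := exists_domSeq G
  have hneD : {n | ∃ l : List V, IsDomSeq G l ∧ l.length = n}.Nonempty :=
    ⟨l0.length, l0, hl0, rfl⟩
  obtain ⟨l, hl, hlen⟩ := Nat.sSup_mem hneD hbddD
  unfold grundy gddn
  rw [← hlen]
  -- maximal DNS extending l
  obtain ⟨l', ⟨hl'dns, hl'pre⟩, hmax⟩ := exists_max_length
    (fun m => IsDNS G m ∧ l <+: m) (fun _ h => h.1.1)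
    ⟨l, hl.1.isDNS, List.prefix_refl l⟩
  -- l' is a DDS
  have hdds : IsDDS G l' := by
    refine ⟨hl'dns, fun v => ?_⟩
    by_contra hc
    have hv : domCount G v l' ≤ 1 := by omega
    obtain ⟨w, hwv, hwl⟩ := exists_fresh G hiso hv
    have := hmax (l' ++ [w]) ⟨hl'dns.append hwl hwv hv, hl'pre.trans (List.prefix_append _ _)⟩
    simp at this
  -- l is nonempty
  have hlne : l ≠ [] := by
    intro h0
    obtain ⟨v⟩ := ‹Nonempty V›
    have := hl.2 v
    rw [h0] at this
    simp [domCount] at this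
  -- l' is strictly longer than l
  have hlt : l.length + 1 ≤ l'.length := by
    by_contra hc
    have hle : l'.length ≤ l.length := by omega
    have heq : l = l' := hl'pre.eq_of_length (le_antisymm hl'pre.length_le hle)
    -- last vertex argument
    have hpos : 0 < l.length := List.length_pos_iff.mpr hlne
    obtain ⟨u, hu, hc0⟩ := hl.1.2 ⟨l.length - 1, by omega⟩
    have hsub : {w | w ∈ l ∧ u ∈ cnbr G w} ⊆ {l.get ⟨l.length - 1, by omega⟩} := by
      rintro w ⟨hwl, hwu⟩
      have hdrop : l.drop (l.length - 1) = [l.get ⟨l.length - 1, by omega⟩] := by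
        rw [List.drop_eq_getElem_cons (by omega)]
        have : l.length - 1 + 1 = l.length := by omega
        rw [this, List.drop_length]
        rfl
      rw [← List.take_append_drop (l.length - 1) l, List.mem_append, hdrop] at hwl
      rcases hwl with hwl | hwl
      · have := one_le_domCount G hwl hwu
        simp only at hc0
        omega
      · simpa using hwl
    have h1 : domCount G u l ≤ 1 := by
      have := Set.ncard_le_ncard hsub (Set.toFinite _)
      simpa [domCount] using this
    have h2 := hdds.2 u
    rw [← heq] at h2
    omega
  -- conclude
  have hbddG : BddAbove {n | ∃ m : List V, IsDDS G m ∧ m.length = n} :=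
    ⟨Fintype.card V, by rintro n ⟨m, hm, rfl⟩; exact hm.1.1.length_le_card⟩
  have hle2 : l'.length ≤ sSup {n | ∃ m : List V, IsDDS G m ∧ m.length = n} := le_csSup hbddG ⟨l', hdds, rfl⟩
  omega
end

section
/- Let G be a graph and p a pendant vertex of G with neighbor v. If there exists a maximum double neighborhood sequence of G − p avoiding v, then ρ(G) = ρ(G − p) + 2; otherwise ρ(G) = ρ(G − p) + 1, where ρ denotes the maximum length of a double neighborhood sequence. -/
open SimpleGraph

variable {V : Type*}

section MyAux

variable {V : Type*}

lemma my_mem_cnbr {G : SimpleGraph V} {w u : V} : u ∈ cnbr G w ↔ u = w ∨ G.Adj w u := by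
  simp [cnbr]

lemma my_domCount_mono [Finite V] (G : SimpleGraph V) (u : V) {l₁ l₂ : List V}
    (h : ∀ x ∈ l₁, x ∈ l₂) : domCount G u l₁ ≤ domCount G u l₂ :=
  Set.ncard_le_ncard (fun x hx => ⟨h x hx.1, hx.2⟩) (Set.toFinite _)

lemma my_isDNS_nil (G : SimpleGraph V) : IsDNS G ([] : List V) :=
  ⟨List.nodup_nil, fun i => absurd i.isLt (by simp)⟩

lemma my_isDNS_concat {G : SimpleGraph V} {l : List V} {a : V} :
    IsDNS G (l ++ [a]) ↔ IsDNS G l ∧ a ∉ l ∧ ∃ u ∈ cnbr G a, domCount G u l ≤ 1 := by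
  have hnd : (l ++ [a]).Nodup ↔ l.Nodup ∧ a ∉ l := by
    simp [List.nodup_append]
    intro _; exact ⟨fun h h' => h a h' rfl, fun h b hb hba => h (hba ▸ hb)⟩
  constructor
  · rintro ⟨h0, h⟩
    refine ⟨⟨(hnd.1 h0).1, fun i => ?_⟩, (hnd.1 h0).2, ?_⟩
    · obtain ⟨u, hu, hc⟩ := h ⟨i.1, by simp⟩
      refine ⟨u, ?_, ?_⟩
      · convert hu using 2
        simp [List.get_eq_getElem]
      · convert hc using 2
        rw [List.take_append]
        have : (i : ℕ) - l.length = 0 := by omega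
        simp [this]
    · obtain ⟨u, hu, hc⟩ := h ⟨l.length, by simp⟩
      refine ⟨u, ?_, ?_⟩
      · convert hu using 2
        simp [List.get_eq_getElem]
      · convert hc using 2
        exact (List.take_left (l₁ := l) (l₂ := [a])).symm
  · rintro ⟨⟨h0, h⟩, ha, u, hu, hc⟩
    refine ⟨hnd.2 ⟨h0, ha⟩, fun i => ?_⟩
    have hil : (i : ℕ) < l.length + 1 := by have := i.isLt; simpa using this
    rcases Nat.lt_or_ge (i : ℕ) l.length with hlt | hge
    · obtain ⟨w, hw, hwc⟩ := h ⟨i, hlt⟩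
      refine ⟨w, ?_, ?_⟩
      · convert hw using 2
        simp [List.get_eq_getElem]
        rw [List.getElem_append_left hlt]
      · convert hwc using 2
        rw [List.take_append]
        have : (i : ℕ) - l.length = 0 := by omega
        simp [this]
    · have hieq : (i : ℕ) = l.length := by omega
      refine ⟨u, ?_, ?_⟩
      · convert hu using 2
        simp [List.get_eq_getElem, hieq]
      · convert hc using 2
        rw [List.take_append, hieq]
        simp
end MyAux

section MyAux2

variable {V : Type*}

lemma my_mdnn_bddAbove [Finite V] (G : SimpleGraph V) :
    BddAbove {n | ∃ l : List V, IsDNS G l ∧ l.length = n} := by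
  haveI := Fintype.ofFinite V
  refine ⟨Fintype.card V, ?_⟩
  rintro n ⟨l, hl, rfl⟩
  exact hl.1.length_le_card

lemma my_exists_mdnn [Finite V] (G : SimpleGraph V) :
    ∃ l : List V, IsDNS G l ∧ l.length = mdnn G := by
  have hne : {n | ∃ l : List V, IsDNS G l ∧ l.length = n}.Nonempty :=
    ⟨0, ⟨[], my_isDNS_nil G, rfl⟩⟩
  exact Nat.sSup_mem hne (my_mdnn_bddAbove G)

lemma my_length_le_mdnn [Finite V] {G : SimpleGraph V} {l : List V} (h : IsDNS G l) :
    l.length ≤ mdnn G := le_csSup (my_mdnn_bddAbove G) ⟨l, h, rfl⟩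

lemma my_mdnn_le [Finite V] {G : SimpleGraph V} {m : ℕ}
    (h : ∀ l : List V, IsDNS G l → l.length ≤ m) : mdnn G ≤ m :=
  csSup_le ⟨0, ⟨[], my_isDNS_nil G, rfl⟩⟩ (by rintro n ⟨l, hl, rfl⟩; exact h l hl)

variable {p v : V}

lemma my_induce_cnbr (G : SimpleGraph V) (a b : ({u : V | u ≠ p} : Set V)) :
    b ∈ cnbr (G.induce {u : V | u ≠ p}) a ↔ (b : V) ∈ cnbr G (a : V) := by
  rw [my_mem_cnbr, my_mem_cnbr]
  simp [Subtype.ext_iff]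

lemma my_domCount_map [Finite V] (G : SimpleGraph V) (u : ({u : V | u ≠ p} : Set V))
    (m : List ({u : V | u ≠ p} : Set V)) :
    domCount (G.induce {u : V | u ≠ p}) u m = domCount G (u : V) (m.map Subtype.val) := by
  unfold domCount
  have himg : {w | w ∈ m.map Subtype.val ∧ (u : V) ∈ cnbr G w} =
      Subtype.val '' {w | w ∈ m ∧ u ∈ cnbr (G.induce {u : V | u ≠ p}) w} := by
    ext x
    constructor
    · rintro ⟨hx, hc⟩
      obtain ⟨w, hw, rfl⟩ := List.mem_map.1 hx
      exact ⟨w, ⟨hw, (my_induce_cnbr G w u).2 hc⟩, rfl⟩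
    · rintro ⟨w, ⟨hw, hc⟩, rfl⟩
      exact ⟨List.mem_map.2 ⟨w, hw, rfl⟩, (my_induce_cnbr G w u).1 hc⟩
  rw [himg, Set.ncard_image_of_injective _ Subtype.val_injective]

lemma my_domCount_p_le_one [Finite V] {G : SimpleGraph V}
    (huniq : ∀ w, G.Adj p w → w = v) {m : List V} (hm : p ∉ m) :
    domCount G p m ≤ 1 := by
  have hsub : {w | w ∈ m ∧ p ∈ cnbr G w} ⊆ {v} := by
    rintro w ⟨hw, hc⟩
    rcases my_mem_cnbr.1 hc with rfl | hadj
    · exact absurd hw hm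
    · exact huniq w hadj.symm
  calc domCount G p m ≤ ({v} : Set V).ncard :=
        Set.ncard_le_ncard hsub (Set.finite_singleton v)
    _ = 1 := Set.ncard_singleton v

lemma my_lift_dns [Finite V] {G : SimpleGraph V}
    {m : List ({u : V | u ≠ p} : Set V)} (h : IsDNS (G.induce {u : V | u ≠ p}) m) :
    IsDNS G (m.map Subtype.val) := by
  induction m using List.reverseRecOn with
  | nil => exact my_isDNS_nil G
  | append_singleton m a ih =>
    rw [my_isDNS_concat] at h
    obtain ⟨h1, h2, u, hu, hcnt⟩ := h
    rw [List.map_append, List.map_singleton, my_isDNS_concat]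
    refine ⟨ih h1, ?_, (u : V), (my_induce_cnbr G a u).1 hu, ?_⟩
    · intro hmem
      obtain ⟨w, hw, hwe⟩ := List.mem_map.1 hmem
      exact h2 (Subtype.val_injective hwe ▸ hw)
    · rw [← my_domCount_map]; exact hcnt

open scoped Classical in
lemma my_shrink_dns [Finite V] {G : SimpleGraph V} (hpv : G.Adj p v)
    (huniq : ∀ w, G.Adj p w → w = v) {l : List V} (h : IsDNS G l) :
    ∃ m : List ({u : V | u ≠ p} : Set V), IsDNS (G.induce {u : V | u ≠ p}) m ∧
      (∀ x ∈ m, (x : V) ≠ v) ∧ (∀ x ∈ m, (x : V) ∈ l) ∧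
      l.length ≤ m.length + (if p ∈ l then 1 else 0) + (if v ∈ l then 1 else 0) := by
  have hvp : v ≠ p := fun hh => G.irrefl (hh ▸ hpv)
  induction l using List.reverseRecOn with
  | nil => exact ⟨[], my_isDNS_nil _, by simp, by simp, by simp⟩
  | append_singleton l a ih =>
    rw [my_isDNS_concat] at h
    obtain ⟨h1, h2, u, hu, hcnt⟩ := h
    obtain ⟨m, hm, hmv, hml, hlen⟩ := ih h1
    by_cases hap : a = p
    · subst hap
      refine ⟨m, hm, hmv, fun x hx => List.mem_append_left _ (hml x hx), ?_⟩
      have hp1 : a ∈ l ++ [a] := by simp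
      have hv1 : v ∈ l ++ [a] ↔ v ∈ l := by simp [hvp]
      rw [if_pos hp1, if_neg h2] at *
      simp only [hv1]
      simp only [List.length_append, List.length_singleton]
      omega
    · by_cases hav : a = v
      · subst hav
        refine ⟨m, hm, hmv, fun x hx => List.mem_append_left _ (hml x hx), ?_⟩
        have hv1 : a ∈ l ++ [a] := by simp
        have hpa : p ≠ a := fun hh => hap hh.symm
        have hp1 : p ∈ l ++ [a] ↔ p ∈ l := by
          simp only [List.mem_append, List.mem_singleton]
          exact or_iff_left hpa
        rw [if_pos hv1, if_neg h2] at *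
        simp only [hp1]
        simp only [List.length_append, List.length_singleton]
        omega
      · -- a ∉ {p, v}
        have hup : u ≠ p := by
          rcases my_mem_cnbr.1 hu with rfl | hadj
          · exact hap
          · rintro rfl
            exact hav (huniq a hadj.symm)
        refine ⟨m ++ [⟨a, hap⟩], ?_, ?_, ?_, ?_⟩
        · rw [my_isDNS_concat]
          refine ⟨hm, ?_, ⟨u, hup⟩, (my_induce_cnbr G ⟨a, hap⟩ ⟨u, hup⟩).2 hu, ?_⟩
          · intro hmem
            exact h2 (hml _ hmem)
          · rw [my_domCount_map]
            refine le_trans (my_domCount_mono G u ?_) hcnt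
            intro x hx
            obtain ⟨w, hw, rfl⟩ := List.mem_map.1 hx
            exact hml w hw
        · intro x hx
          rcases List.mem_append.1 hx with hx | hx
          · exact hmv x hx
          · simp at hx; subst hx; exact hav
        · intro x hx
          rcases List.mem_append.1 hx with hx | hx
          · exact List.mem_append_left _ (hml x hx)
          · simp at hx; subst hx; simp
        · have hpa : p ≠ a := fun hh => hap hh.symm
          have hva : v ≠ a := fun hh => hav hh.symm
          have hp1 : p ∈ l ++ [a] ↔ p ∈ l := by
            simp only [List.mem_append, List.mem_singleton]
            exact or_iff_left hpa
          have hv1 : v ∈ l ++ [a] ↔ v ∈ l := by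
            simp only [List.mem_append, List.mem_singleton]
            exact or_iff_left hva
          simp only [hp1, hv1]
          simp only [List.length_append, List.length_singleton]
          omega

end MyAux2

/-- removal of a pendant vertex p with neighbor v: ρ(G) = ρ(G−p) + 2 if some
MDNS of G−p avoids v, and ρ(G) = ρ(G−p) + 1 otherwise. -/
theorem stmt8 [Fintype V] (G : SimpleGraph V) (p v : V)
    (hpv : G.Adj p v) (huniq : ∀ w, G.Adj p w → w = v) :
    ((∃ l : List ({u : V | u ≠ p} : Set V), IsDNS (G.induce {u : V | u ≠ p}) l ∧
        l.length = mdnn (G.induce {u : V | u ≠ p}) ∧ ∀ x ∈ l, (x : V) ≠ v) →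
      mdnn G = mdnn (G.induce {u : V | u ≠ p}) + 2) ∧
    ((¬ ∃ l : List ({u : V | u ≠ p} : Set V), IsDNS (G.induce {u : V | u ≠ p}) l ∧
        l.length = mdnn (G.induce {u : V | u ≠ p}) ∧ ∀ x ∈ l, (x : V) ≠ v) →
      mdnn G = mdnn (G.induce {u : V | u ≠ p}) + 1) := by
  have hvp : v ≠ p := fun hh => G.irrefl (hh ▸ hpv)
  constructor
  · rintro ⟨m, hm, hmlen, hmv⟩
    refine le_antisymm ?_ ?_
    · refine my_mdnn_le fun l hl => ?_
      obtain ⟨m', hm', -, -, hlen⟩ := my_shrink_dns hpv huniq hl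
      have h1 := my_length_le_mdnn hm'
      split_ifs at hlen <;> omega
    · have hmap : ∀ x ∈ m.map Subtype.val, x ≠ p := by
        intro x hx
        obtain ⟨w, hw, rfl⟩ := List.mem_map.1 hx
        exact w.2
      have hvm : v ∉ m.map Subtype.val := by
        intro hx
        obtain ⟨w, hw, hwe⟩ := List.mem_map.1 hx
        exact hmv w hw hwe
      have hd1 : IsDNS G (m.map Subtype.val ++ [v]) := by
        rw [my_isDNS_concat]
        refine ⟨my_lift_dns hm, hvm, p, ?_, ?_⟩
        · exact my_mem_cnbr.2 (Or.inr hpv.symm)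
        · exact my_domCount_p_le_one huniq (fun hx => hmap p hx rfl)
      have hd2 : IsDNS G ((m.map Subtype.val ++ [v]) ++ [p]) := by
        rw [my_isDNS_concat]
        refine ⟨hd1, ?_, p, my_mem_cnbr.2 (Or.inl rfl), ?_⟩
        · intro hx
          rcases List.mem_append.1 hx with hx | hx
          · exact hmap p hx rfl
          · simp at hx; exact hvp hx.symm
        · refine my_domCount_p_le_one huniq ?_
          intro hx
          rcases List.mem_append.1 hx with hx | hx
          · exact hmap p hx rfl
          · simp at hx; exact hvp hx.symm
      have hle := my_length_le_mdnn hd2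
      simp only [List.length_append, List.length_map, List.length_singleton] at hle
      omega
  · intro hno
    refine le_antisymm ?_ ?_
    · refine my_mdnn_le fun l hl => ?_
      obtain ⟨m', hm', hmv', -, hlen⟩ := my_shrink_dns hpv huniq hl
      by_contra hgt
      push_neg at hgt
      have h1 := my_length_le_mdnn hm'
      have h2 : m'.length = mdnn (G.induce {u : V | u ≠ p}) := by
        split_ifs at hlen <;> omega
      exact hno ⟨m', hm', h2, hmv'⟩
    · obtain ⟨m, hm, hmlen⟩ := my_exists_mdnn (G.induce {u : V | u ≠ p})
      have hmap : ∀ x ∈ m.map Subtype.val, x ≠ p := by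
        intro x hx
        obtain ⟨w, hw, rfl⟩ := List.mem_map.1 hx
        exact w.2
      have hd1 : IsDNS G (m.map Subtype.val ++ [p]) := by
        rw [my_isDNS_concat]
        refine ⟨my_lift_dns hm, fun hx => hmap p hx rfl, p, my_mem_cnbr.2 (Or.inl rfl), ?_⟩
        exact my_domCount_p_le_one huniq (fun hx => hmap p hx rfl)
      have hle := my_length_le_mdnn hd1
      simp only [List.length_append, List.length_map, List.length_singleton] at hle
      omega
end

section
/- If T is a tree, then the maximum double neighborhood number of T equals |V(T)|; that is, there is an ordering of all vertices of T forming a double neighborhood sequence. -/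
open SimpleGraph

variable {V : Type*}

open List in
lemma lemA [DecidableEq V] {G : SimpleGraph V} (h : G.IsTree) (r u v : V) (hadj : G.Adj u v) :
    G.dist r u ≠ G.dist r v := by
  intro heq
  obtain ⟨p, hp, hlen⟩ := h.isConnected.exists_path_of_dist r u
  by_cases hv : v ∈ p.support
  · have hne : v ≠ u := hadj.ne'
    have hspec := p.take_spec hv
    have h1 : 1 ≤ (p.dropUntil v hv).length := by
      rcases Nat.eq_zero_or_pos (p.dropUntil v hv).length with h0 | h0
      · exact absurd ((Walk.eq_of_length_eq_zero h0)) hne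
      · exact h0
    have h2 : (p.takeUntil v hv).length + (p.dropUntil v hv).length = p.length := by
      rw [← Walk.length_append, hspec]
    have h3 := G.dist_le (p.takeUntil v hv)
    omega
  · have hq : (p.concat hadj).IsPath := by
      rw [← Walk.isPath_reverse_iff, Walk.reverse_concat]
      exact hp.reverse.cons (by simpa using hv)
    obtain ⟨p', hp', hlen'⟩ := h.isConnected.exists_path_of_dist r v
    have := (h.existsUnique_path r v).unique hq hp'
    have : (p.concat hadj).length = p'.length := by rw [this]
    rw [Walk.length_concat, hlen, hlen'] at this
    omega

lemma lemB [DecidableEq V] {G : SimpleGraph V} (h : G.IsTree) (r v w₁ w₂ : V) (h1 : G.Adj w₁ v) (h2 : G.Adj w₂ v)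
    (hd1 : G.dist r w₁ < G.dist r v) (hd2 : G.dist r w₂ < G.dist r v) : w₁ = w₂ := by
  have key : ∀ w : V, ∀ hw : G.Adj w v, G.dist r w < G.dist r v →
      ∃ p : G.Walk r w, (p.concat hw).IsPath := by
    intro w hw hd
    obtain ⟨p, hp, hlen⟩ := h.isConnected.exists_path_of_dist r w
    refine ⟨p, ?_⟩
    have hv : v ∉ p.support := by
      intro hv
      have := G.dist_le (p.takeUntil v hv)
      have := p.length_takeUntil_le hv
      omega
    rw [← Walk.isPath_reverse_iff, Walk.reverse_concat]
    exact hp.reverse.cons (by simpa using hv)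
  obtain ⟨p1, hq1⟩ := key w₁ h1 hd1
  obtain ⟨p2, hq2⟩ := key w₂ h2 hd2
  have := (h.existsUnique_path r v).unique hq1 hq2
  obtain ⟨hv, -⟩ := Walk.concat_inj this
  exact hv

/-- for a tree, the maximum double neighborhood number equals the number of
vertices: some ordering of all the vertices is a double neighborhood sequence. -/
theorem stmt9 [Fintype V] (G : SimpleGraph V) (h : G.IsTree) :
    mdnn G = Fintype.card V ∧ ∃ l : List V, IsDNS G l ∧ ∀ v : V, v ∈ l := by
  classical
  have hne : Nonempty V := h.isConnected.nonempty
  obtain ⟨r⟩ := hne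
  set rel : V → V → Prop := fun a b => G.dist r a ≤ G.dist r b with hrel
  haveI : DecidableRel rel := fun a b => by unfold rel; infer_instance
  haveI htot : IsTotal V rel := ⟨fun a b => le_total _ _⟩
  haveI htr : IsTrans V rel := ⟨fun a b c => le_trans⟩
  set l : List V := (Finset.univ.toList (α := V)).insertionSort rel with hl
  have hperm : l.Perm Finset.univ.toList := List.perm_insertionSort rel _
  have hnodup : l.Nodup := hperm.nodup_iff.2 (Finset.nodup_toList _)
  have hmem : ∀ v : V, v ∈ l := fun v => hperm.mem_iff.2 (Finset.mem_toList.2 (Finset.mem_univ v))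
  have hsorted : l.Pairwise rel := List.pairwise_insertionSort rel _
  have hdns : IsDNS G l := by
    refine ⟨hnodup, fun i => ?_⟩
    set v := l.get i with hv
    refine ⟨v, Set.mem_insert _ _, ?_⟩
    -- v not in take
    have hvnot : v ∉ l.take i := by
      intro hvt
      obtain ⟨j, hj, hjl⟩ := List.getElem_of_mem hvt
      rw [List.getElem_take] at hjl
      have hji : j < i := by simpa using hj
      exact absurd (List.Nodup.getElem_inj_iff hnodup |>.1 hjl) (by omega)
    -- every element of take is rel-below v
    have hrel_take : ∀ w ∈ l.take i, G.dist r w ≤ G.dist r v := by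
      intro w hw
      obtain ⟨j, hj, hjl⟩ := List.getElem_of_mem hw
      rw [List.getElem_take] at hjl
      have hji : j < i := by simpa using hj
      have := List.pairwise_iff_get.1 hsorted ⟨j, by omega⟩ i (Fin.lt_def.2 (by simpa using hji))
      simpa [hjl, hrel, hv] using this
    have hsub : ∀ a ∈ {w | w ∈ l.take i ∧ v ∈ cnbr G w},
        ∀ b ∈ {w | w ∈ l.take i ∧ v ∈ cnbr G w}, a = b := by
      rintro a ⟨hat, hav⟩ b ⟨hbt, hbv⟩
      have hadj : ∀ w, w ∈ l.take i → v ∈ cnbr G w → G.Adj w v := by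
        rintro w hwt (hw | hw)
        · exact absurd (hw ▸ hwt) hvnot
        · exact (G.mem_neighborSet w v).1 hw |>.symm.symm
      have ha := hadj a hat hav
      have hb := hadj b hbt hbv
      have hda : G.dist r a < G.dist r v :=
        lt_of_le_of_ne (hrel_take a hat) (lemA h r a v ha)
      have hdb : G.dist r b < G.dist r v :=
        lt_of_le_of_ne (hrel_take b hbt) (lemA h r b v hb)
      exact lemB h r v a b ha hb hda hdb
    show Set.ncard _ ≤ 1
    exact (Set.ncard_le_one_iff (Set.toFinite _)).2 (fun ha hb => hsub _ ha _ hb)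
  have hlen : l.length = Fintype.card V := by
    rw [hperm.length_eq, Finset.length_toList, Finset.card_univ]
  refine ⟨?_, l, hdns, hmem⟩
  have hub : ∀ n ∈ {n | ∃ l : List V, IsDNS G l ∧ l.length = n}, n ≤ Fintype.card V := by
    rintro n ⟨l', ⟨hnd, -⟩, rfl⟩
    exact hnd.length_le_card
  have hmem' : Fintype.card V ∈ {n | ∃ l : List V, IsDNS G l ∧ l.length = n} := ⟨l, hdns, hlen⟩
  exact le_antisymm (csSup_le ⟨_, hmem'⟩ hub) (le_csSup ⟨_, hub⟩ hmem')
end
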